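/- Let (λ_i) be positive reals with λ = inf_i λ_i > 0, z0 ∈ l^2 nonzero, ρ > σ > 0. For each admissible evader control v(t) = (v_1(t), v_2(t), ...) with ||v(t)|| ≤ σ for all t, the pursuer strategy u_i(t) = -(z_{i0}/||z0||)(ρ-σ) + v_i(t) for t ≤ T_i and u_i(t) = v_i(t) for t > T_i, where T_i = (1/λ_i)·ln(λ_i||z0||/(ρ-σ)+1), is admissible (||u(t)|| ≤ ρ for all t) and guarantees z_i(t) = 0 for all i and all t ≥ T = (1/λ)·ln(λ||z0||/(ρ-σ)+1). -/

import Mathlib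

open Real MeasureTheory
open scoped ENNReal NNReal

private lemma l2_conv (h : ℕ → ℝ) :
    (fun i => ‖h i‖ ^ (2 : ℝ≥0∞).toReal) = fun i => h i ^ 2 := by
  funext i
  rw [show ((2 : ℝ≥0∞)).toReal = ((2 : ℕ) : ℝ) by norm_num, Real.rpow_natCast,
    Real.norm_eq_abs, sq_abs]

private lemma l2_minkowski (f g : ℕ → ℝ) (hf : Summable fun i => f i ^ 2)
    (hg : Summable fun i => g i ^ 2) :
    Summable (fun i => (f i + g i) ^ 2) ∧
      Real.sqrt (∑' i, (f i + g i) ^ 2) ≤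
        Real.sqrt (∑' i, f i ^ 2) + Real.sqrt (∑' i, g i ^ 2) := by
  have hf' : Memℓp f 2 := memℓp_gen (by rw [l2_conv]; exact hf)
  have hg' : Memℓp g 2 := memℓp_gen (by rw [l2_conv]; exact hg)
  have hfg : Memℓp (f + g) 2 := hf'.add hg'
  have hsum : Summable (fun i => (f i + g i) ^ 2) := by
    have := hfg.summable (by norm_num)
    rwa [l2_conv] at this
  refine ⟨hsum, ?_⟩
  set F : lp (fun _ : ℕ => ℝ) 2 := ⟨f, hf'⟩ with hF
  set G : lp (fun _ : ℕ => ℝ) 2 := ⟨g, hg'⟩ with hG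
  have hnorm : ∀ h : lp (fun _ : ℕ => ℝ) 2,
      ‖h‖ = Real.sqrt (∑' i, (h : ℕ → ℝ) i ^ 2) := by
    intro h
    rw [lp.norm_eq_tsum_rpow (by norm_num) h,
      show (∑' i, ‖(h : ℕ → ℝ) i‖ ^ (2 : ℝ≥0∞).toReal) = ∑' i, (h : ℕ → ℝ) i ^ 2 by
        exact congrArg tsum (l2_conv _),
      Real.sqrt_eq_rpow]
    norm_num
  have htri : ‖F + G‖ ≤ ‖F‖ + ‖G‖ := norm_add_le F G
  rw [hnorm, hnorm, hnorm] at htri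
  have hFG : ∀ i, ((F + G : lp (fun _ : ℕ => ℝ) 2) : ℕ → ℝ) i = f i + g i := by
    intro i
    rw [lp.coeFn_add]
    rfl
  have hFc : ∀ i, (F : ℕ → ℝ) i = f i := fun i => rfl
  have hGc : ∀ i, (G : ℕ → ℝ) i = g i := fun i => rfl
  simpa only [hFG, hFc, hGc] using htri

/-- Main theorem: the pursuer strategy is admissible and guarantees capture
of every coordinate by time T = (1/λ)·ln(λ‖z0‖/(ρ-σ)+1), λ = inf λ_i. -/
theorem stmt8 (lam : ℕ → ℝ) (hlam : ∀ i, 0 < lam i)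
    (l : ℝ) (hl : l = ⨅ i, lam i) (hlpos : 0 < l)
    (z0 : ℕ → ℝ) (hz0 : Summable (fun i => (z0 i)^2)) (hz0ne : z0 ≠ 0)
    (N : ℝ) (hN : N = Real.sqrt (∑' i, (z0 i)^2))
    (ρ σ : ℝ) (hσ : 0 < σ) (hρσ : σ < ρ)
    (v : ℝ → ℕ → ℝ) (hvmeas : ∀ i, Measurable (fun t => v t i))
    (hvsum : ∀ t, Summable (fun i => (v t i)^2))
    (hvnorm : ∀ t, Real.sqrt (∑' i, (v t i)^2) ≤ σ)
    (T : ℕ → ℝ)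
    (hT : ∀ i, T i = (1 / lam i) * Real.log (lam i * N / (ρ - σ) + 1))
    (u : ℝ → ℕ → ℝ)
    (hu : ∀ t i, u t i =
      if t ≤ T i then -(z0 i / N) * (ρ - σ) + v t i else v t i)
    (z : ℝ → ℕ → ℝ)
    (hz : ∀ t i, z t i =
      Real.exp (-lam i * t) *
        (z0 i + ∫ s in (0:ℝ)..t, Real.exp (lam i * s) * (u s i - v s i)))
    (Tg : ℝ) (hTg : Tg = (1 / l) * Real.log (l * N / (ρ - σ) + 1)) :
    (∀ t, Summable (fun i => (u t i)^2) ∧ Real.sqrt (∑' i, (u t i)^2) ≤ ρ) ∧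
    (∀ i, ∀ t ≥ Tg, z t i = 0) := by
  have hρσ' : 0 < ρ - σ := by linarith
  -- N > 0
  obtain ⟨j, hj⟩ : ∃ j, z0 j ≠ 0 := Function.ne_iff.mp hz0ne
  have hsum_pos : 0 < ∑' i, (z0 i) ^ 2 :=
    Summable.tsum_pos hz0 (fun i => sq_nonneg _) j (by positivity)
  have hNpos : 0 < N := hN ▸ Real.sqrt_pos.2 hsum_pos
  have hNsq : N ^ 2 = ∑' i, (z0 i) ^ 2 := by rw [hN, Real.sq_sqrt hsum_pos.le]
  constructor
  · -- admissibility
    intro t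
    set d : ℕ → ℝ := fun i => if t ≤ T i then -(z0 i / N) * (ρ - σ) else 0 with hd
    have hud : (fun i => u t i) = fun i => d i + v t i := by
      funext i
      rw [hu]
      simp only [hd]
      split_ifs <;> ring
    have hdle : ∀ i, d i ^ 2 ≤ (ρ - σ) ^ 2 / N ^ 2 * (z0 i) ^ 2 := by
      intro i
      simp only [hd]
      split_ifs
      · rw [show (-(z0 i / N) * (ρ - σ)) ^ 2 = (ρ - σ) ^ 2 / N ^ 2 * (z0 i) ^ 2 by
          field_simp]
      · rw [show ((0:ℝ)) ^ 2 = 0 by norm_num]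
        positivity
    have hd2 : Summable (fun i => d i ^ 2) :=
      Summable.of_nonneg_of_le (fun i => sq_nonneg _) hdle (hz0.mul_left _)
    have hdsum : ∑' i, d i ^ 2 ≤ (ρ - σ) ^ 2 := by
      calc ∑' i, d i ^ 2 ≤ ∑' i, (ρ - σ) ^ 2 / N ^ 2 * (z0 i) ^ 2 :=
            Summable.tsum_le_tsum hdle hd2 (hz0.mul_left _)
        _ = (ρ - σ) ^ 2 / N ^ 2 * ∑' i, (z0 i) ^ 2 := tsum_mul_left
        _ = (ρ - σ) ^ 2 := by rw [← hNsq]; field_simp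
    have hdnorm : Real.sqrt (∑' i, d i ^ 2) ≤ ρ - σ := by
      calc Real.sqrt (∑' i, d i ^ 2) ≤ Real.sqrt ((ρ - σ) ^ 2) :=
            Real.sqrt_le_sqrt hdsum
        _ = ρ - σ := Real.sqrt_sq hρσ'.le
    obtain ⟨hsumm, hle⟩ := l2_minkowski d (v t) hd2 (hvsum t)
    constructor
    · rw [show (fun i => (u t i) ^ 2) = fun i => (d i + v t i) ^ 2 by
        funext i; rw [congrFun hud i]]
      exact hsumm
    · rw [show (fun i => (u t i) ^ 2) = fun i => (d i + v t i) ^ 2 by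
        funext i; rw [congrFun hud i]]
      calc Real.sqrt (∑' i, (d i + v t i) ^ 2)
          ≤ Real.sqrt (∑' i, d i ^ 2) + Real.sqrt (∑' i, (v t i) ^ 2) := hle
        _ ≤ (ρ - σ) + σ := add_le_add hdnorm (hvnorm t)
        _ = ρ := by ring
  · -- capture
    intro i t ht
    have hli : 0 < lam i := hlam i
    have hlle : l ≤ lam i := by
      rw [hl]
      exact ciInf_le ⟨0, fun x ⟨j, hj⟩ => hj ▸ (hlam j).le⟩ i
    have hargpos : 0 < lam i * N / (ρ - σ) + 1 := by positivity
    have hexpT : Real.exp (lam i * T i) = lam i * N / (ρ - σ) + 1 := by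
      rw [hT, show lam i * (1 / lam i * Real.log (lam i * N / (ρ - σ) + 1)) =
        Real.log (lam i * N / (ρ - σ) + 1) by field_simp]
      exact Real.exp_log hargpos
    have hTnonneg : 0 ≤ T i := by
      rw [hT]
      have : (0 : ℝ) ≤ Real.log (lam i * N / (ρ - σ) + 1) :=
        Real.log_nonneg (by nlinarith [mul_pos hli hNpos, div_pos (mul_pos hli hNpos) hρσ'])
      positivity
    -- T i ≤ Tg
    have hTle : T i ≤ Tg := by
      rw [hT, hTg]
      set c : ℝ := N / (ρ - σ) with hc
      have hcpos : 0 < c := by positivity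
      have hb : lam i * N / (ρ - σ) = lam i * c := by rw [hc]; ring
      have ha : l * N / (ρ - σ) = l * c := by rw [hc]; ring
      rw [hb, ha]
      have hber : 1 + (lam i / l) * (l * c) ≤ (1 + l * c) ^ (lam i / l) :=
        one_add_mul_self_le_rpow_one_add
          (by nlinarith [mul_pos hlpos hcpos] : (-1:ℝ) ≤ l * c)
          ((one_le_div hlpos).2 hlle)
      have h1 : 1 + (lam i / l) * (l * c) = 1 + lam i * c := by field_simp
      rw [h1] at hber
      have hlog : Real.log (lam i * c + 1) ≤ (lam i / l) * Real.log (l * c + 1) := by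
        rw [add_comm (lam i * c) 1, add_comm (l * c) 1]
        calc Real.log (1 + lam i * c) ≤ Real.log ((1 + l * c) ^ (lam i / l)) :=
              Real.log_le_log (by nlinarith [mul_pos hli hcpos]) hber
          _ = (lam i / l) * Real.log (1 + l * c) := Real.log_rpow (by nlinarith [mul_pos hlpos hcpos]) _
      calc 1 / lam i * Real.log (lam i * c + 1)
          ≤ 1 / lam i * ((lam i / l) * Real.log (l * c + 1)) :=
            mul_le_mul_of_nonneg_left hlog (by positivity)
        _ = 1 / l * Real.log (l * c + 1) := by field_simp
    have hTt : T i ≤ t := hTle.trans ht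
    -- the integrand
    set c0 : ℝ := -(z0 i / N) * (ρ - σ) with hc0
    have hfun : ∀ s, Real.exp (lam i * s) * (u s i - v s i) =
        if s ≤ T i then Real.exp (lam i * s) * c0 else 0 := by
      intro s
      rw [hu]
      split_ifs with h
      · ring
      · ring
    have hi1 : IntervalIntegrable
        (fun s => if s ≤ T i then Real.exp (lam i * s) * c0 else 0) volume 0 (T i) := by
      have hcont : Continuous (fun s : ℝ => Real.exp (lam i * s) * c0) :=
        (Real.continuous_exp.comp (continuous_const.mul continuous_id)).mul continuous_const
      apply (hcont.intervalIntegrable 0 (T i)).congr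
      intro s hs
      rw [Set.uIoc_of_le hTnonneg] at hs
      simp only [if_pos hs.2]
    have hi2 : IntervalIntegrable
        (fun s => if s ≤ T i then Real.exp (lam i * s) * c0 else 0) volume (T i) t := by
      refine (_root_.intervalIntegrable_const (c := (0:ℝ))).congr ?_
      intro s hs
      rw [Set.uIoc_of_le hTt] at hs
      simp only [if_neg (not_le.2 hs.1)]
    have hint2 : (∫ s in (T i)..t,
        if s ≤ T i then Real.exp (lam i * s) * c0 else 0) = 0 := by
      have h0 : (∫ s in (T i)..t,
          if s ≤ T i then Real.exp (lam i * s) * c0 else 0) = ∫ s in (T i)..t, (0:ℝ) := by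
        refine intervalIntegral.integral_congr_ae (ae_of_all _ fun s hs => ?_)
        rw [Set.uIoc_of_le hTt] at hs
        simp only [if_neg (not_le.2 hs.1)]
      rw [h0]
      simp
    have hint1 : (∫ s in (0:ℝ)..(T i),
        if s ≤ T i then Real.exp (lam i * s) * c0 else 0) = -(z0 i) := by
      have he1 : (∫ s in (0:ℝ)..(T i),
          if s ≤ T i then Real.exp (lam i * s) * c0 else 0) =
          ∫ s in (0:ℝ)..(T i), Real.exp (lam i * s) * c0 := by
        refine intervalIntegral.integral_congr fun s hs => ?_
        rw [Set.uIcc_of_le hTnonneg] at hs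
        simp only [if_pos hs.2]
      rw [he1, intervalIntegral.integral_mul_const]
      have he2 : (∫ s in (0:ℝ)..(T i), Real.exp (lam i * s)) =
          (lam i)⁻¹ * (Real.exp (lam i * T i) - 1) := by
        rw [intervalIntegral.integral_comp_mul_left (f := Real.exp) hli.ne']
        simp [integral_exp, smul_eq_mul]
      rw [he2, hexpT, hc0]
      field_simp
      ring
    rw [hz]
    have hsplit : (∫ s in (0:ℝ)..t, Real.exp (lam i * s) * (u s i - v s i)) =
        (∫ s in (0:ℝ)..(T i), if s ≤ T i then Real.exp (lam i * s) * c0 else 0) +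
        (∫ s in (T i)..t, if s ≤ T i then Real.exp (lam i * s) * c0 else 0) := by
      rw [show (fun s => Real.exp (lam i * s) * (u s i - v s i)) =
          fun s => if s ≤ T i then Real.exp (lam i * s) * c0 else 0 from funext hfun]
      exact (intervalIntegral.integral_add_adjacent_intervals hi1 hi2).symm
    rw [hsplit, hint1, hint2]
    ring
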